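/- Simon-type monotonicity inequality for 1 < p < 2: if 1 < p < 2, then for all u, v ∈ ℝ^N with (u, v) ≠ (0, 0) one has ⟨F(u) − F(v), u − v⟩ ≥ c · (|u| + |v|)^{p−2} · |u − v|². -/

import Mathlib

open Real

section SimonAux

variable {E : Type*} [NormedAddCommGroup E] [InnerProductSpace ℝ E]

/-- Derivative of `t ↦ φ(‖v + t d‖) ⟪v + t d, d⟫` at a point where `v + t d ≠ 0`. -/
lemma simon_hasDerivAt (φ φ' : ℝ → ℝ) (hderiv : ∀ ξ > (0:ℝ), HasDerivAt φ (φ' ξ) ξ)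
    (v d : E) (t : ℝ) (hw : v + t • d ≠ 0) :
    HasDerivAt (fun s : ℝ => φ ‖v + s • d‖ * (inner ℝ (v + s • d) d : ℝ))
      (φ' ‖v + t • d‖ * ((inner ℝ (v + t • d) d : ℝ) / ‖v + t • d‖) * (inner ℝ (v + t • d) d : ℝ)
        + φ ‖v + t • d‖ * ‖d‖ ^ 2) t := by
  have hw' : HasDerivAt (fun s : ℝ => v + s • d) d t := by
    simpa using ((hasDerivAt_id t).smul_const d).const_add v
  have hnpos : (0:ℝ) < ‖v + t • d‖ := norm_pos_iff.mpr hw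
  have hinner : HasDerivAt (fun s : ℝ => (inner ℝ (v + s • d) (v + s • d) : ℝ))
      (2 * (inner ℝ (v + t • d) d : ℝ)) t := by
    have := hw'.inner ℝ hw'
    simpa [real_inner_comm, two_mul] using this
  have hself : (inner ℝ (v + t • d) (v + t • d) : ℝ) ≠ 0 := by
    rw [real_inner_self_eq_norm_sq]; positivity
  have hnorm : HasDerivAt (fun s : ℝ => ‖v + s • d‖)
      ((inner ℝ (v + t • d) d : ℝ) / ‖v + t • d‖) t := by
    have h1 := hinner.sqrt hself
    have heq : ∀ s : ℝ, Real.sqrt (inner ℝ (v + s • d) (v + s • d) : ℝ) = ‖v + s • d‖ := by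
      intro s; rw [real_inner_self_eq_norm_sq, Real.sqrt_sq (norm_nonneg _)]
    simp only [heq] at h1
    simpa [mul_div_mul_left _ _ (two_ne_zero (α := ℝ))] using h1
  have hφc : HasDerivAt (fun s : ℝ => φ ‖v + s • d‖)
      (φ' ‖v + t • d‖ * ((inner ℝ (v + t • d) d : ℝ) / ‖v + t • d‖)) t :=
    (hderiv _ hnpos).comp t hnorm
  have hinner2 : HasDerivAt (fun s : ℝ => (inner ℝ (v + s • d) d : ℝ)) (‖d‖ ^ 2) t := by
    have := hw'.inner ℝ (hasDerivAt_const t d)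
    simpa [real_inner_self_eq_norm_sq] using this
  exact hφc.mul hinner2

lemma simon_key_bound (p c : ℝ) (φ φ' : ℝ → ℝ)
    (hφ : ∀ ξ > (0 : ℝ), c * ξ ^ (p - 2) ≤ φ ξ)
    (hφ' : ∀ ξ > (0 : ℝ), c * ξ ^ (p - 2) ≤ φ ξ + ξ * φ' ξ)
    (ρ s D : ℝ) (hρ : 0 < ρ) (hs : s ^ 2 ≤ ρ ^ 2 * D ^ 2) :
    c * ρ ^ (p - 2) * D ^ 2 ≤ φ' ρ * (s / ρ) * s + φ ρ * D ^ 2 := by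
  have h1 := hφ ρ hρ
  have h2 := hφ' ρ hρ
  have hrw : φ' ρ * (s / ρ) * s = φ' ρ * s ^ 2 / ρ := by ring
  rw [hrw]
  rcases le_or_gt 0 (φ' ρ) with h | h
  · have hpos : 0 ≤ φ' ρ * s ^ 2 / ρ := by positivity
    nlinarith [mul_le_mul_of_nonneg_right h1 (sq_nonneg D)]
  · have h3 : φ' ρ * ρ * D ^ 2 ≤ φ' ρ * s ^ 2 / ρ := by
      rw [le_div_iff₀ hρ]
      nlinarith [mul_le_mul_of_nonpos_left hs h.le]
    nlinarith [mul_le_mul_of_nonneg_right h2 (sq_nonneg D)]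

lemma simon_self_le_rpow (t q : ℝ) (ht0 : 0 ≤ t) (ht1 : t ≤ 1) (hq0 : 0 < q) (hq1 : q ≤ 1) :
    t ≤ t ^ q := by
  rcases eq_or_lt_of_le ht0 with h | h
  · simp [← h, Real.zero_rpow (ne_of_gt hq0)]
  · calc t = t ^ (1:ℝ) := (Real.rpow_one t).symm
      _ ≤ t ^ q := Real.rpow_le_rpow_of_exponent_ge h ht1 hq1

end SimonAux

set_option maxHeartbeats 1600000 in
/-- Simon-type monotonicity inequality for `1 < p < 2`. -/
theorem simon_inequality_p_lt_two {N : ℕ} (hN : 1 ≤ N) (p c : ℝ)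
    (hp : 1 < p) (hc : 0 < c) (φ φ' : ℝ → ℝ)
    (hderiv : ∀ ξ > (0 : ℝ), HasDerivAt φ (φ' ξ) ξ)
    (hderivcont : ContinuousOn φ' (Set.Ioi 0))
    (hφ : ∀ ξ > (0 : ℝ), c * ξ ^ (p - 2) ≤ φ ξ)
    (hφ' : ∀ ξ > (0 : ℝ), c * ξ ^ (p - 2) ≤ φ ξ + ξ * φ' ξ)
    (F : EuclideanSpace ℝ (Fin N) → EuclideanSpace ℝ (Fin N))
    (hF : ∀ v : EuclideanSpace ℝ (Fin N), v ≠ 0 → F v = φ ‖v‖ • v) (hF0 : F 0 = 0)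
    (hp2 : p < 2) :
    ∀ u v : EuclideanSpace ℝ (Fin N), ¬(u = 0 ∧ v = 0) →
      c * (‖u‖ + ‖v‖) ^ (p - 2) * ‖u - v‖ ^ 2 ≤ (inner ℝ (F u - F v) (u - v) : ℝ) := by
  intro u v huv
  by_cases heqc : u = v
  · subst heqc; simp
  have hd : u - v ≠ 0 := sub_ne_zero.mpr heqc
  set d := u - v with hd_def
  have hdn : (0:ℝ) < ‖d‖ := norm_pos_iff.mpr hd
  have hp1 : (0:ℝ) < p - 1 := by linarith
  have hp11 : p - 1 ≤ 1 := by linarith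
  by_cases hseg : ∀ t ∈ Set.Icc (0:ℝ) 1, v + t • d ≠ 0
  · -- Case A : the segment from v to u avoids the origin
    have e1 : v + (1:ℝ) • d = u := by rw [one_smul, hd_def]; abel
    have hv0 : v ≠ 0 := by
      have := hseg 0 ⟨le_rfl, zero_le_one⟩; simpa using this
    have hu0 : u ≠ 0 := by
      have := hseg 1 ⟨zero_le_one, le_rfl⟩; rwa [e1] at this
    set M := c * (‖u‖ + ‖v‖) ^ (p - 2) * ‖d‖ ^ 2 with hM
    have hkey : ∀ t ∈ Set.Icc (0:ℝ) 1,
        HasDerivAt (fun s : ℝ => φ ‖v + s • d‖ * (inner ℝ (v + s • d) d : ℝ) - M * s)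
          (φ' ‖v + t • d‖ * ((inner ℝ (v + t • d) d : ℝ) / ‖v + t • d‖) *
              (inner ℝ (v + t • d) d : ℝ) + φ ‖v + t • d‖ * ‖d‖ ^ 2 - M) t := by
      intro t ht
      have hMl : HasDerivAt (fun s : ℝ => M * s) M t := by
        simpa using (hasDerivAt_id t).const_mul M
      exact (simon_hasDerivAt φ φ' hderiv v d t (hseg t ht)).sub hMl
    have hmono : MonotoneOn (fun s : ℝ => φ ‖v + s • d‖ * (inner ℝ (v + s • d) d : ℝ) - M * s)
        (Set.Icc 0 1) := by
      apply monotoneOn_of_deriv_nonneg (convex_Icc 0 1)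
      · intro t ht; exact ((hkey t ht).continuousAt).continuousWithinAt
      · intro t ht
        rw [interior_Icc] at ht
        exact ((hkey t (Set.mem_Icc_of_Ioo ht)).differentiableAt).differentiableWithinAt
      · intro t ht
        rw [interior_Icc] at ht
        have hti : t ∈ Set.Icc (0:ℝ) 1 := Set.mem_Icc_of_Ioo ht
        rw [(hkey t hti).deriv]
        have hwne := hseg t hti
        have hρ : (0:ℝ) < ‖v + t • d‖ := norm_pos_iff.mpr hwne
        have hcs : (inner ℝ (v + t • d) d : ℝ) ^ 2 ≤ ‖v + t • d‖ ^ 2 * ‖d‖ ^ 2 := by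
          have h1 := abs_real_inner_le_norm (v + t • d) d
          nlinarith [abs_nonneg (inner ℝ (v + t • d) d : ℝ), sq_abs (inner ℝ (v + t • d) d : ℝ),
            norm_nonneg (v + t • d), norm_nonneg d]
        have hb := simon_key_bound p c φ φ' hφ hφ' ‖v + t • d‖
          (inner ℝ (v + t • d) d : ℝ) ‖d‖ hρ hcs
        have hle : ‖v + t • d‖ ≤ ‖u‖ + ‖v‖ := by
          have heq2 : v + t • d = (1 - t) • v + t • u := by
            rw [hd_def, smul_sub, sub_smul, one_smul]; abel
          rw [heq2]
          have h1 : ‖(1 - t) • v + t • u‖ ≤ ‖(1 - t) • v‖ + ‖t • u‖ := norm_add_le _ _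
          have h2 : ‖(1 - t) • v‖ = |1 - t| * ‖v‖ := by rw [norm_smul, Real.norm_eq_abs]
          have h3 : ‖t • u‖ = |t| * ‖u‖ := by rw [norm_smul, Real.norm_eq_abs]
          have h4 : |1 - t| ≤ 1 := abs_le.mpr ⟨by linarith [ht.1, ht.2], by linarith [ht.1]⟩
          have h5 : |t| ≤ 1 := abs_le.mpr ⟨by linarith [ht.1], le_of_lt ht.2⟩
          nlinarith [norm_nonneg u, norm_nonneg v, abs_nonneg (1 - t), abs_nonneg t]
        have hr : (‖u‖ + ‖v‖) ^ (p - 2) ≤ ‖v + t • d‖ ^ (p - 2) :=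
          Real.rpow_le_rpow_of_nonpos hρ hle (by linarith)
        have hMle : M ≤ c * ‖v + t • d‖ ^ (p - 2) * ‖d‖ ^ 2 := by
          rw [hM]; gcongr
        linarith
    have h01 := hmono (Set.left_mem_Icc.mpr zero_le_one) (Set.right_mem_Icc.mpr zero_le_one)
      zero_le_one
    have e1' : v + d = u := by rw [hd_def]; abel
    simp only [zero_smul, add_zero, one_smul, mul_zero, sub_zero, mul_one, e1'] at h01
    have hFu : (inner ℝ (F u) d : ℝ) = φ ‖u‖ * (inner ℝ u d : ℝ) := by
      rw [hF u hu0, real_inner_smul_left]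
    have hFv : (inner ℝ (F v) d : ℝ) = φ ‖v‖ * (inner ℝ v d : ℝ) := by
      rw [hF v hv0, real_inner_smul_left]
    have hsplit : (inner ℝ (F u - F v) d : ℝ) = φ ‖u‖ * (inner ℝ u d : ℝ)
        - φ ‖v‖ * (inner ℝ v d : ℝ) := by
      rw [inner_sub_left, hFu, hFv]
    rw [hsplit]
    linarith
  · -- Case B : the segment passes through the origin, so u and v are anti-parallel
    push_neg at hseg
    obtain ⟨t, htI, hw0⟩ := hseg
    have ht0 : (0:ℝ) ≤ t := htI.1
    have ht1 : t ≤ 1 := htI.2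
    have hv_eq : v = -(t • d) := eq_neg_of_add_eq_zero_left hw0
    have hu_eq : u = (1 - t) • d := by
      have hud : u = v + d := by rw [hd_def]; abel
      rw [hud, hv_eq, sub_smul, one_smul]; abel
    have hnv : ‖v‖ = t * ‖d‖ := by
      rw [hv_eq, norm_neg, norm_smul, Real.norm_eq_abs, abs_of_nonneg ht0]
    have hnu : ‖u‖ = (1 - t) * ‖d‖ := by
      rw [hu_eq, norm_smul, Real.norm_eq_abs, abs_of_nonneg (by linarith : (0:ℝ) ≤ 1 - t)]
    have hsum : ‖u‖ + ‖v‖ = ‖d‖ := by rw [hnu, hnv]; ring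
    have hX : (0:ℝ) < ‖d‖ ^ (p - 2) * ‖d‖ ^ 2 := by positivity
    -- lower bound for ⟪F u, d⟫
    have hAu : c * (1 - t) ^ (p - 1) * (‖d‖ ^ (p - 2) * ‖d‖ ^ 2) ≤ (inner ℝ (F u) d : ℝ) := by
      by_cases h1t : t = 1
      · have hu0 : u = 0 := by rw [hu_eq, h1t]; simp
        rw [hu0, hF0]
        simp [h1t, Real.zero_rpow (ne_of_gt hp1)]
      · have h1t' : (0:ℝ) < 1 - t := by
          have := lt_of_le_of_ne ht1 h1t; linarith
        have hu0 : u ≠ 0 := by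
          rw [hu_eq]; exact smul_ne_zero (ne_of_gt h1t') hd
        have hiu : (inner ℝ u d : ℝ) = (1 - t) * ‖d‖ ^ 2 := by
          rw [hu_eq, real_inner_smul_left, real_inner_self_eq_norm_sq]
        rw [hF u hu0, real_inner_smul_left, hiu, hnu]
        have hφu := hφ ((1 - t) * ‖d‖) (by positivity)
        have e1 : ((1 - t) * ‖d‖) ^ (p - 2) = (1 - t) ^ (p - 2) * ‖d‖ ^ (p - 2) :=
          Real.mul_rpow h1t'.le (norm_nonneg d)
        have e2 : (1 - t) ^ (p - 2) * (1 - t) = (1 - t) ^ (p - 1) := by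
          have h := Real.rpow_add_one (ne_of_gt h1t') (p - 2)
          rw [show p - 2 + 1 = p - 1 by ring] at h
          exact h.symm
        calc c * (1 - t) ^ (p - 1) * (‖d‖ ^ (p - 2) * ‖d‖ ^ 2)
            = (c * ((1 - t) * ‖d‖) ^ (p - 2)) * ((1 - t) * ‖d‖ ^ 2) := by
              rw [e1, ← e2]; ring
          _ ≤ φ ((1 - t) * ‖d‖) * ((1 - t) * ‖d‖ ^ 2) :=
              mul_le_mul_of_nonneg_right hφu (by positivity)
    -- lower bound for -⟪F v, d⟫
    have hAv : c * t ^ (p - 1) * (‖d‖ ^ (p - 2) * ‖d‖ ^ 2) ≤ -(inner ℝ (F v) d : ℝ) := by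
      by_cases ht0' : t = 0
      · have hv0 : v = 0 := by rw [hv_eq, ht0']; simp
        rw [hv0, hF0]
        simp [ht0', Real.zero_rpow (ne_of_gt hp1)]
      · have htpos : (0:ℝ) < t := lt_of_le_of_ne ht0 (Ne.symm ht0')
        have hv0 : v ≠ 0 := by
          rw [hv_eq, neg_ne_zero]; exact smul_ne_zero (ne_of_gt htpos) hd
        have hiv : (inner ℝ v d : ℝ) = -(t * ‖d‖ ^ 2) := by
          rw [hv_eq, inner_neg_left, real_inner_smul_left, real_inner_self_eq_norm_sq]
        rw [hF v hv0, real_inner_smul_left, hiv, hnv]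
        have hφv := hφ (t * ‖d‖) (by positivity)
        have e1 : (t * ‖d‖) ^ (p - 2) = t ^ (p - 2) * ‖d‖ ^ (p - 2) :=
          Real.mul_rpow ht0 (norm_nonneg d)
        have e2 : t ^ (p - 2) * t = t ^ (p - 1) := by
          have h := Real.rpow_add_one (ne_of_gt htpos) (p - 2)
          rw [show p - 2 + 1 = p - 1 by ring] at h
          exact h.symm
        rw [mul_neg, neg_neg]
        calc c * t ^ (p - 1) * (‖d‖ ^ (p - 2) * ‖d‖ ^ 2)
            = (c * (t * ‖d‖) ^ (p - 2)) * (t * ‖d‖ ^ 2) := by rw [e1, ← e2]; ring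
          _ ≤ φ (t * ‖d‖) * (t * ‖d‖ ^ 2) :=
              mul_le_mul_of_nonneg_right hφv (by positivity)
    -- combine
    have hs1 : 1 ≤ (1 - t) ^ (p - 1) + t ^ (p - 1) := by
      have h1 := simon_self_le_rpow t (p - 1) ht0 ht1 hp1 hp11
      have h2 := simon_self_le_rpow (1 - t) (p - 1) (by linarith) (by linarith) hp1 hp11
      linarith
    rw [hsum, inner_sub_left]
    have hexp : c * ((1 - t) ^ (p - 1) + t ^ (p - 1)) * (‖d‖ ^ (p - 2) * ‖d‖ ^ 2)
        = c * (1 - t) ^ (p - 1) * (‖d‖ ^ (p - 2) * ‖d‖ ^ 2)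
          + c * t ^ (p - 1) * (‖d‖ ^ (p - 2) * ‖d‖ ^ 2) := by ring
    have hfirst : c * ‖d‖ ^ (p - 2) * ‖d‖ ^ 2
        ≤ c * ((1 - t) ^ (p - 1) + t ^ (p - 1)) * (‖d‖ ^ (p - 2) * ‖d‖ ^ 2) := by
      nlinarith [mul_pos hc hX]
    linarith
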